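/- Let A be an abelian group, G = Aut(A) its automorphism group acting on A naturally by g·a = g(a), and let q be an integer such that multiplication by q is an automorphism of A. Then (q − 1) annihilates H¹(G, A), i.e., (q−1)·x = 0 for every x ∈ H¹(G, A). -/

import Mathlib

/-- The multiplicative group structure on `AddAut A` (composition), which Mathlib had as an
instance in the original version and has since replaced by an additive group structure. -/
instance AddAut.group (A : Type*) [Add A] : Group (AddAut A) where
  mul g h := AddEquiv.trans h g
  one := AddEquiv.refl _
  inv := AddEquiv.symm
  mul_assoc _ _ _ := rfl
  one_mul _ := rfl
  mul_one _ := rfl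
  inv_mul_cancel := AddEquiv.self_trans_symm

/-- The natural representation of `G = Aut(A)` on the abelian group `A`, given by
`g · a = g(a)`. -/
noncomputable def natRep (A : Type) [AddCommGroup A] : Representation ℤ (AddAut A) A where
  toFun g := AddMonoidHom.toIntLinearMap (AddEquiv.toAddMonoidHom g)
  map_one' := by ext a; rfl
  map_mul' g h := by ext a; rfl

open groupCohomology in
/-- Let `A` be an abelian group, `G = Aut(A)` acting naturally on `A`,
and `q` an integer such that multiplication by `q` is an automorphism of `A`. Then
`q - 1` annihilates `H¹(G, A)`. -/
theorem sub_one_annihilates_H1_natural (A : Type) [AddCommGroup A] (q : ℤ)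
    (hq : Function.Bijective fun a : A => q • a) :
    ∀ x : H1 (Rep.of (natRep A)), (q - 1) • x = 0 := by
  -- the multiplication-by-q automorphism
  let c : AddAut A := AddEquiv.ofBijective
    (AddMonoidHom.mk' (fun a : A => q • a) (smul_add q)) hq
  have hc : ∀ a : A, c a = q • a := fun a => rfl
  intro x
  induction x using H1_induction_on with | h f => ?_
  rw [← map_zsmul, H1π_eq_zero_iff]
  rw [coboundaries₁, LinearMap.mem_range]
  refine ⟨(f : AddAut A → A) c, funext fun g => ?_⟩
  rw [d₀₁_hom_apply]
  have hcocycle := (mem_cocycles₁_iff (A := Rep.of (natRep A)) f).1 f.2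
  have hcomm : g * c = c * g := by
    ext a
    show g (c a) = c (g a)
    rw [hc, hc, map_zsmul]
  have h1 := hcocycle g c
  have h2 := hcocycle c g
  rw [hcomm] at h1
  have hρc : ((Rep.of (natRep A)).ρ c) ((f : AddAut A → A) g) = q • (f : AddAut A → A) g := by
    exact hc _
  rw [h1, hρc] at h2
  have : ((Rep.of (natRep A)).ρ g) ((f : AddAut A → A) c) - (f : AddAut A → A) c
      = q • (f : AddAut A → A) g - (f : AddAut A → A) g := by
    rw [sub_eq_sub_iff_add_eq_add]
    linear_combination (norm := abel) h2
  rw [this, sub_smul, one_smul]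
  rfl
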